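/- Let u>0, s≥0 and ν₀,ν₁≥0 with ν₀+ν₁=1, and assume ν₀>0 or u ≥ s. Let y : [0,∞) → ℝ be differentiable with y(0)=y₀ ∈ [0,1] and y'(t) = −s y(t)(1−y(t)) − u ν₀ y(t) + u ν₁ (1−y(t)) for all t ≥ 0. Then y(t) → ȳ as t → ∞, where ȳ = (1/2)(1 + u/s − √((1−u/s)² + 4ν₀u/s)) if s>0 and ȳ = ν₁ if s=0. -/

import Mathlib

open Filter Set Real

private lemma one_sided_gronwall {f f' : ℝ → ℝ} {δ K ε a b : ℝ}
    (hf : ContinuousOn f (Set.Icc a b))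
    (hder : ∀ x ∈ Set.Ico a b, HasDerivWithinAt f (f' x) (Set.Ici x) x)
    (ha : f a ≤ δ) (bound : ∀ x ∈ Set.Ico a b, f' x ≤ K * f x + ε) :
    ∀ x ∈ Set.Icc a b, f x ≤ gronwallBound δ K ε (x - a) :=
  le_gronwallBound_of_liminf_deriv_right_le hf
    (fun x hx _r hr => (hder x hx).liminf_right_slope_le hr) ha bound

/-- if the derivative on `[0,∞)` is at least `c`, then `y t ≥ y 0 + c t`. -/
private lemma linear_growth {y d : ℝ → ℝ} {c : ℝ}
    (hder : ∀ t, (0:ℝ) ≤ t → HasDerivAt y (d t) t)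
    (hd : ∀ t, (0:ℝ) ≤ t → c ≤ d t) :
    ∀ t, (0:ℝ) ≤ t → y 0 + c * t ≤ y t := by
  intro b hb
  have key := one_sided_gronwall (f := fun t => y 0 + c * t - y t)
    (f' := fun t => c - d t) (δ := 0) (K := 0) (ε := 0) (a := 0) (b := b)
    ?_ ?_ (by simp) ?_
  · have h2 : y 0 + c * b - y b ≤ 0 := by
      have := key b ⟨hb, le_rfl⟩
      rwa [sub_zero, gronwallBound_ε0_δ0] at this
    linarith
  · intro t ht
    exact ((continuousAt_const.add (continuous_mul_left c).continuousAt).sub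
      (hder t ht.1).continuousAt).continuousWithinAt
  · intro t ht
    exact (((hasDerivAt_const t (y 0)).add ((hasDerivAt_id t).const_mul c)).sub
      (hder t ht.1)).hasDerivWithinAt.congr_deriv (by ring)
  · intro t ht
    have := hd t ht.1
    simp only [zero_mul, zero_add]
    linarith

private lemma mono_of_deriv_nonneg {y d : ℝ → ℝ}
    (hder : ∀ t, (0:ℝ) ≤ t → HasDerivAt y (d t) t)
    (hd : ∀ t, (0:ℝ) ≤ t → 0 ≤ d t) :
    ∀ a b, (0:ℝ) ≤ a → a ≤ b → y a ≤ y b := by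
  intro a b ha hab
  have key := one_sided_gronwall (f := fun t => y a - y t)
    (f' := fun t => - d t) (δ := 0) (K := 0) (ε := 0) (a := a) (b := b)
    ?_ ?_ (by simp) ?_
  · have h2 : y a - y b ≤ 0 := by
      have := key b ⟨hab, le_rfl⟩
      rwa [gronwallBound_ε0_δ0] at this
    linarith
  · intro t ht
    exact (continuousAt_const.sub (hder t (ha.trans ht.1)).continuousAt).continuousWithinAt
  · intro t ht
    exact ((hasDerivAt_const t (y a)).sub
      (hder t (ha.trans ht.1))).hasDerivWithinAt.congr_deriv (by ring)
  · intro t ht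
    have := hd t (ha.trans ht.1)
    simp only [zero_mul, zero_add]
    linarith

/-- exponential decay of `(y - c)²` gives convergence to `c`. -/
private lemma sq_decay {y d : ℝ → ℝ} {c K : ℝ} (hK : 0 < K)
    (hder : ∀ t, (0:ℝ) ≤ t → HasDerivAt y (d t) t)
    (hbound : ∀ t, (0:ℝ) ≤ t → 2 * (y t - c) * d t ≤ -K * (y t - c) ^ 2) :
    Tendsto y atTop (nhds c) := by
  set V : ℝ → ℝ := fun t => (y t - c) ^ 2 with hV
  have hVder : ∀ t, (0:ℝ) ≤ t → HasDerivAt V (2 * (y t - c) * d t) t := by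
    intro t ht
    have h1 : HasDerivAt (fun t => y t - c) (d t) t := (hder t ht).sub_const c
    have := h1.pow 2
    exact this.congr_deriv (by ring)
  have key : ∀ t, (0:ℝ) ≤ t → V t ≤ V 0 * Real.exp (-K * t) := by
    intro b hb
    have k2 := one_sided_gronwall (f := V) (f' := fun t => 2 * (y t - c) * d t)
      (δ := V 0) (K := -K) (ε := 0) (a := 0) (b := b)
      (fun t ht => (hVder t ht.1).continuousAt.continuousWithinAt)
      (fun t ht => (hVder t ht.1).hasDerivWithinAt)
      le_rfl
      (fun t ht => by simpa using hbound t ht.1)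
    have := k2 b ⟨hb, le_rfl⟩
    rwa [sub_zero, gronwallBound_ε0] at this
  have hexp : Tendsto (fun t : ℝ => V 0 * Real.exp (-K * t)) atTop (nhds 0) := by
    have h1 : Tendsto (fun t : ℝ => -K * t) atTop atBot :=
      tendsto_id.const_mul_atTop_of_neg (by linarith)
    have := (Real.tendsto_exp_atBot.comp h1).const_mul (V 0)
    simpa using this
  have hV0 : Tendsto V atTop (nhds 0) := by
    apply squeeze_zero' (by filter_upwards [eventually_ge_atTop (0:ℝ)] with t _ using sq_nonneg _)
      _ hexp
    filter_upwards [eventually_ge_atTop (0:ℝ)] with t ht using key t ht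
  have habs : Tendsto (fun t => |y t - c|) atTop (nhds 0) := by
    have h3 := (Real.continuous_sqrt.tendsto 0).comp hV0
    have he : (fun x => Real.sqrt x) ∘ V = fun t => |y t - c| :=
      funext fun t => Real.sqrt_sq_eq_abs _
    rw [he] at h3
    simpa using h3
  have hsub : Tendsto (fun t => y t - c) atTop (nhds 0) := by
    rw [tendsto_zero_iff_abs_tendsto_zero]
    convert habs using 1
    rfl
  simpa using hsub.add_const c

/-- Forward invariance of `y ≤ 1` when the vector field at `y = 1` points down. -/
private lemma invariance_le_one {y d : ℝ → ℝ} {A B C : ℝ} (hA : 0 ≤ A) (hC : C ≤ 0)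
    (hder : ∀ t, (0:ℝ) ≤ t → HasDerivAt y (d t) t)
    (hd : ∀ t, (0:ℝ) ≤ t → d t = A * (y t - 1) ^ 2 + B * (y t - 1) + C)
    (h0 : y 0 ≤ 1) : ∀ t, (0:ℝ) ≤ t → y t ≤ 1 := by
  by_contra hcon
  push_neg at hcon
  obtain ⟨T, hT0, hT⟩ := hcon
  have hcont : ContinuousOn y (Set.Icc 0 T) :=
    fun t ht => (hder t ht.1).continuousAt.continuousWithinAt
  set S : Set ℝ := Set.Icc 0 T ∩ y ⁻¹' (Set.Iic 1) with hS
  have hSclosed : IsClosed S := by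
    apply ContinuousOn.preimage_isClosed_of_isClosed hcont isClosed_Icc isClosed_Iic
  have hSne : S.Nonempty := ⟨0, ⟨le_rfl, hT0⟩, h0⟩
  have hSbdd : BddAbove S := BddAbove.mono Set.inter_subset_left isCompact_Icc.bddAbove
  set τ := sSup S with hτ
  have hτS : τ ∈ S := hSclosed.csSup_mem hSne hSbdd
  have hτ0 : (0:ℝ) ≤ τ := hτS.1.1
  have hτT' : τ ≤ T := hτS.1.2
  have hτT : τ < T := by
    rcases eq_or_lt_of_le hτT' with h | h
    · exact absurd (h ▸ hτS.2) (not_le.2 hT)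
    · exact h
  have habove : ∀ t ∈ Set.Ioc τ T, 1 < y t := by
    intro t ht
    by_contra hle
    push_neg at hle
    have : t ∈ S := ⟨⟨hτ0.trans ht.1.le, ht.2⟩, hle⟩
    exact absurd (le_csSup hSbdd this) (not_le.2 ht.1)
  have hyτ : y τ = 1 := by
    refine le_antisymm hτS.2 ?_
    have htd : Tendsto y (nhdsWithin τ (Set.Ioi τ)) (nhds (y τ)) :=
      ((hder τ hτ0).continuousAt.continuousWithinAt).tendsto
    refine ge_of_tendsto htd ?_
    filter_upwards [Ioc_mem_nhdsGT hτT] with z hz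
    exact (habove z hz).le
  obtain ⟨M, hM⟩ := (isCompact_Icc (a := τ) (b := T)).exists_bound_of_continuousOn
    (hcont.mono (Set.Icc_subset_Icc_left hτ0))
  set K := |B| + A * (M + 1) with hK
  have key := one_sided_gronwall (f := fun t => y t - 1) (f' := d)
    (δ := 0) (K := K) (ε := 0) (a := τ) (b := T)
    ?_ ?_ (by simp [hyτ]) ?_
  · have h2 : y T - 1 ≤ 0 := by
      have := key T ⟨hτT.le, le_rfl⟩
      rwa [gronwallBound_ε0_δ0] at this
    linarith
  · intro t ht
    exact ((hder t (hτ0.trans ht.1)).continuousAt.sub continuousAt_const).continuousWithinAt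
  · intro t ht
    exact ((hder t (hτ0.trans ht.1)).sub_const 1).hasDerivWithinAt
  · intro t ht
    have ht0 : (0:ℝ) ≤ t := hτ0.trans ht.1
    have hh0 : 0 ≤ y t - 1 := by
      rcases eq_or_lt_of_le ht.1 with h | h
      · simp [← h, hyτ]
      · linarith [habove t ⟨h, ht.2.le⟩]
    have hhM : y t - 1 ≤ M + 1 := by
      have := hM t ⟨ht.1, ht.2.le⟩
      rw [Real.norm_eq_abs] at this
      have := abs_le.1 this
      linarith [this.2]
    rw [hd t ht0]
    have h1 : (|B| - B) * (y t - 1) ≥ 0 :=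
      mul_nonneg (by linarith [le_abs_self B]) hh0
    have h2 : A * (y t - 1) * (M + 1 - (y t - 1)) ≥ 0 :=
      mul_nonneg (mul_nonneg hA hh0) (by linarith)
    simp only [add_zero]
    nlinarith [h1, h2]

/-- Global convergence of the mutation-selection equation to the stable equilibrium `ȳ`:
if `ν₀ > 0` or `u ≥ s`, every solution with initial value `y₀ ∈ [0,1]` converges to
`ȳ = (1/2)(1 + u/s - √((1 - u/s)² + 4ν₀u/s))` (for `s > 0`), resp. `ȳ = ν₁` (for `s = 0`). -/
theorem mutation_selection_tendsto_equilibrium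
    (u s ν₀ ν₁ : ℝ) (hu : 0 < u) (hs : 0 ≤ s)
    (hν₀ : 0 ≤ ν₀) (hν₁ : 0 ≤ ν₁) (hν : ν₀ + ν₁ = 1)
    (hcase : 0 < ν₀ ∨ s ≤ u)
    (y : ℝ → ℝ) (y₀ : ℝ) (hy₀ : y₀ ∈ Set.Icc (0 : ℝ) 1) (hinit : y 0 = y₀)
    (hode : ∀ t : ℝ, 0 ≤ t →
      HasDerivAt y (-s * y t * (1 - y t) - u * ν₀ * y t + u * ν₁ * (1 - y t)) t) :
    Tendsto y atTop
      (nhds (if 0 < s then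
          (1 + u / s - Real.sqrt ((1 - u / s) ^ 2 + 4 * ν₀ * (u / s))) / 2
        else ν₁)) := by
  obtain ⟨hy0l, hy0u⟩ := hy₀
  have hν₁' : ν₁ = 1 - ν₀ := by linarith
  subst hν₁'
  set d : ℝ → ℝ := fun t => -s * y t * (1 - y t) - u * ν₀ * y t + u * (1 - ν₀) * (1 - y t)
    with hd
  have hder : ∀ t, (0:ℝ) ≤ t → HasDerivAt y (d t) t := hode
  -- invariance: y t ≤ 1 for all t ≥ 0
  have hinv : ∀ t, (0:ℝ) ≤ t → y t ≤ 1 := by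
    apply invariance_le_one (A := s) (B := s - u) (C := -(u * ν₀)) hs
      (by nlinarith) hder _ (by rw [hinit]; exact hy0u)
    intro t ht
    simp only [hd]
    ring
  rcases hs.lt_or_eq with hs' | hs'
  · -- s > 0
    rw [if_pos hs']
    have hs0 : s ≠ 0 := ne_of_gt hs'
    set r := Real.sqrt ((1 - u / s) ^ 2 + 4 * ν₀ * (u / s)) with hrdef
    have hq0 : 0 < u / s := div_pos hu hs'
    have hrad : 0 ≤ (1 - u / s) ^ 2 + 4 * ν₀ * (u / s) :=
      add_nonneg (sq_nonneg _) (mul_nonneg (by linarith) hq0.le)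
    have hr2 : r ^ 2 = (1 - u / s) ^ 2 + 4 * ν₀ * (u / s) := by
      rw [hrdef]; exact Real.sq_sqrt hrad
    have hr0 : 0 ≤ r := Real.sqrt_nonneg _
    have hq : s * (u / s) = u := mul_div_cancel₀ u hs0
    set yb := (1 + u / s - r) / 2 with hyb
    set yp := (1 + u / s + r) / 2 with hyp
    have hfact : ∀ x : ℝ, -s * x * (1 - x) - u * ν₀ * x + u * (1 - ν₀) * (1 - x)
        = s * (x - yb) * (x - yp) := by
      intro x
      have h1 : (x - yb) * (x - yp)
          = x ^ 2 - (1 + u / s) * x + ((1 + u / s) ^ 2 - r ^ 2) / 4 := by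
        rw [hyb, hyp]; ring
      conv_rhs => rw [mul_assoc, h1, hr2]
      linear_combination (x - (1 - ν₀)) * hq
    by_cases hyp1 : 1 < yp
    · -- nondegenerate case: exponential convergence to yb
      apply sq_decay (K := 2 * s * (yp - 1)) (by nlinarith) hder
      intro t ht
      have h1 : y t ≤ 1 := hinv t ht
      have h2 : d t = s * (y t - yb) * (y t - yp) := hfact (y t)
      rw [h2]
      nlinarith [mul_nonneg (mul_nonneg hs'.le (sq_nonneg (y t - yb)))
        (sub_nonneg.2 h1)]
    · -- degenerate case: ν₀ = 0 and u = s; then yb = 1 and y' = s (y-1)²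
      push_neg at hyp1
      have hν₀0 : ν₀ = 0 := by
        by_contra h
        have hν₀pos : 0 < ν₀ := lt_of_le_of_ne hν₀ (Ne.symm h)
        have : 1 - u / s < r := by nlinarith
        rw [hyp] at hyp1
        linarith
      have hus : u = s := by
        rcases hcase with h | h
        · exact absurd hν₀0 (ne_of_gt h)
        · rcases h.lt_or_eq with h' | h'
          · exfalso
            have : (1:ℝ) < u / s := (one_lt_div hs').2 h'
            rw [hyp] at hyp1
            linarith
          · exact h'.symm
      subst hus
      have hq1 : u / u = 1 := div_self (ne_of_gt hu)
      have hr0' : r = 0 := by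
        rw [hrdef, hν₀0, hq1]
        norm_num
      have hyb1 : yb = 1 := by rw [hyb, hq1, hr0']; norm_num
      rw [hyb1] at hfact ⊢
      have hyp1' : yp = 1 := by rw [hyp, hq1, hr0']; norm_num
      rw [hyp1'] at hfact
      have hdsq : ∀ t, d t = u * (y t - 1) ^ 2 := by
        intro t
        have := hfact (y t)
        simp only [hd] at this ⊢
        rw [this]; ring
      have hmono : ∀ a b : ℝ, 0 ≤ a → a ≤ b → y a ≤ y b := by
        apply mono_of_deriv_nonneg hder
        intro t ht
        rw [hdsq t]
        positivity
      rw [tendsto_order]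
      constructor
      · intro a ha
        by_cases hex : ∃ t₀, 0 ≤ t₀ ∧ a < y t₀
        · obtain ⟨t₀, ht₀, hat₀⟩ := hex
          filter_upwards [eventually_ge_atTop t₀] with t ht
          exact lt_of_lt_of_le hat₀ (hmono t₀ t ht₀ ht)
        · exfalso
          push_neg at hex
          set c := u * (1 - a) ^ 2 with hc
          have hcpos : 0 < c := by
            rw [hc]; exact mul_pos hu (pow_pos (by linarith) 2)
          have hgrow := linear_growth hder (c := c) ?_
          · set T := (a - y 0 + 1) / c with hT
            have hT0 : 0 ≤ T := by
              apply div_nonneg _ hcpos.le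
              have := hex 0 le_rfl
              linarith
            have h1 := hgrow T hT0
            have h2 : c * T = a - y 0 + 1 := by
              rw [hT]; field_simp
            have h3 := hex T hT0
            linarith
          · intro t ht
            have h1 : y t ≤ a := hex t ht
            rw [hdsq t, hc]
            nlinarith [mul_nonneg (mul_nonneg hu.le (sub_nonneg.2 h1))
              (by linarith : (0:ℝ) ≤ 2 - y t - a)]
      · intro a ha
        filter_upwards [eventually_ge_atTop (0:ℝ)] with t ht
        exact lt_of_le_of_lt (hinv t ht) ha
  · -- s = 0
    subst hs'
    rw [if_neg (lt_irrefl 0)]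
    apply sq_decay (K := 2 * u) (by linarith) hder
    intro t ht
    have : d t = -u * (y t - (1 - ν₀)) := by simp only [hd]; ring
    rw [this]
    nlinarith [sq_nonneg (y t - (1 - ν₀))]
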